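/- Let (c,e) define a canonical family of strategies (x_λ) as above. Then for every A ∈ {−1,0,1}^{Ω×I} and a ∈ ℤ, the limit L(A,a) = lim_{λ→0⁺} λ^a ∏_{(ω,i)} x_λ^i(ω)^{A(ω,i)} exists in [0,+∞], and L(A,a) = 0 iff a + Σ_{(ω,i)} A(ω,i) e(ω,i) > 0; L(A,a) = +∞ iff a + Σ_{(ω,i)} A(ω,i) e(ω,i) < 0; and L(A,a) = ∏_{(ω,i)} c(ω,i)^{A(ω,i)} ∈ (0,∞) iff a + Σ_{(ω,i)} A(ω,i) e(ω,i) = 0. Consequently, for any sequence λ_n → 0, the sequence (λ_n, x_{λ_n}) is regular. -/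

import Mathlib

open Filter Topology Finset
open scoped ENNReal

/-- The monomial `λ^a ∏_{(ω,i)} x^i(ω)^{A(ω,i)}`, evaluated in `[0,+∞]` with the
conventions `0^0 = 1`, `0^β = 0` and `0^{-β} = +∞` for `β > 0`. -/
noncomputable def monoVal {Ω I : Type*} [Fintype Ω] [Fintype I]
    (lam : ℝ) (x : Ω → I → ℝ) (A : Ω × I → ℤ) (a : ℤ) : ℝ≥0∞ :=
  (ENNReal.ofReal lam) ^ a * ∏ p : Ω × I, (ENNReal.ofReal (x p.1 p.2)) ^ (A p)

/-- Membership of `(A,a)` in the index set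
`M = { (A,a) | A ∈ {-1,0,1}^{Ω×I}, |a| ≤ |Ω| }`. -/
def memM (Ω I : Type*) [Fintype Ω] [Fintype I] (A : Ω × I → ℤ) (a : ℤ) : Prop :=
  (∀ p, A p = -1 ∨ A p = 0 ∨ A p = 1) ∧ a.natAbs ≤ Fintype.card Ω

/-- A sequence `(λ_n, x_n)` of discount factors and stationary strategies is regular if
`λ_n → 0` and for every `(A,a) ∈ M` the limit `L(A,a) = lim_n λ_n^a ∏ x_n^i(ω)^{A(ω,i)}`
exists in `[0,+∞]`. -/
def IsRegularSeq {Ω I : Type*} [Fintype Ω] [Fintype I]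
    (lam : ℕ → ℝ) (x : ℕ → Ω → I → ℝ) : Prop :=
  Tendsto lam atTop (𝓝 0) ∧
  ∀ A a, memM Ω I A a →
    ∃ l : ℝ≥0∞, Tendsto (fun n => monoVal (lam n) (x n) A a) atTop (𝓝 l)

/-- The canonical stationary strategy induced by coefficients `c` and exponents `e`:
`x_λ^i(ω) = c(ω,i) λ^{e(ω,i)} / Σ_{i'} c(ω,i') λ^{e(ω,i')}`. -/
noncomputable def xcan {Ω I : Type*} [Fintype I]
    (c e : Ω → I → ℝ) (lam : ℝ) (ω : Ω) (i : I) : ℝ :=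
  c ω i * lam ^ (e ω i) / ∑ i', c ω i' * lam ^ (e ω i')

/-- For a canonical family of strategies `(x_λ)` induced by `(c,e)`, for every
`A ∈ {-1,0,1}^{Ω×I}` and `a ∈ ℤ` the limit `L(A,a) = lim_{λ→0⁺} λ^a ∏ x_λ^i(ω)^{A(ω,i)}`
exists in `[0,+∞]`, is `0` (resp. `+∞`, resp. `∏ c^A ∈ (0,∞)`) iff
`a + Σ A(ω,i) e(ω,i)` is `> 0` (resp. `< 0`, resp. `= 0`); consequently, for any sequence
`λ_n → 0` in `(0,1]`, the sequence `(λ_n, x_{λ_n})` is regular. -/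
private lemma ofReal_zpow' {x : ℝ} (hx : 0 < x) (n : ℤ) :
    ENNReal.ofReal (x ^ n) = (ENNReal.ofReal x) ^ n := by
  obtain ⟨m, rfl | rfl⟩ := n.eq_nat_or_neg
  · simp [ENNReal.ofReal_pow hx.le]
  · have h0 : ENNReal.ofReal x ≠ 0 := by simp [ENNReal.ofReal_eq_zero]; linarith
    rw [zpow_neg, ENNReal.zpow_neg, zpow_natCast, zpow_natCast,
      ENNReal.ofReal_inv_of_pos (pow_pos hx m), ENNReal.ofReal_pow hx.le]

theorem xcan_limits_and_regular {Ω I : Type*} [Fintype Ω] [Fintype I]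
    (c e : Ω → I → ℝ)
    (hc : ∀ ω i, 0 < c ω i) (he : ∀ ω i, 0 ≤ e ω i)
    (hsum : ∀ ω, ∑ i ∈ univ.filter (fun i => e ω i = 0), c ω i = 1) :
    (∀ A : Ω × I → ℤ, (∀ p, A p = -1 ∨ A p = 0 ∨ A p = 1) → ∀ a : ℤ,
      ∃ L : ℝ≥0∞,
        Tendsto (fun lam => monoVal lam (xcan c e lam) A a) (𝓝[>] (0:ℝ)) (𝓝 L) ∧
        (L = 0 ↔ 0 < (a:ℝ) + ∑ p : Ω × I, (A p : ℝ) * e p.1 p.2) ∧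
        (L = ⊤ ↔ (a:ℝ) + ∑ p : Ω × I, (A p : ℝ) * e p.1 p.2 < 0) ∧
        ((L = ∏ p : Ω × I, (ENNReal.ofReal (c p.1 p.2)) ^ (A p) ∧ L ≠ 0 ∧ L ≠ ⊤) ↔
          (a:ℝ) + ∑ p : Ω × I, (A p : ℝ) * e p.1 p.2 = 0)) ∧
    (∀ lam : ℕ → ℝ, (∀ n, lam n ∈ Set.Ioc (0:ℝ) 1) → Tendsto lam atTop (𝓝 0) →
      IsRegularSeq lam (fun n => xcan c e (lam n))) := by
  have hDpos : ∀ (ω : Ω) (l : ℝ), 0 < l → 0 < ∑ i', c ω i' * l ^ e ω i' := by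
    intro ω l hl
    obtain ⟨i0, hi0, -⟩ := Finset.exists_ne_zero_of_sum_ne_zero
      (by rw [hsum ω]; norm_num : ∑ i ∈ univ.filter (fun i => e ω i = 0), c ω i ≠ 0)
    exact Finset.sum_pos (fun i _ => mul_pos (hc ω i) (Real.rpow_pos_of_pos hl _))
      ⟨i0, mem_univ i0⟩
  have hD1 : ∀ ω : Ω, Tendsto (fun l : ℝ => ∑ i', c ω i' * l ^ e ω i')
      (𝓝[>] (0:ℝ)) (𝓝 1) := by
    intro ω
    have h1 : Tendsto (fun l : ℝ => ∑ i', c ω i' * l ^ e ω i') (𝓝 0)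
        (𝓝 (∑ i', c ω i' * (0:ℝ) ^ e ω i')) := by
      apply tendsto_finset_sum
      intro i _
      exact tendsto_const_nhds.mul
        ((Real.continuousAt_rpow_const 0 (e ω i) (Or.inr (he ω i))).tendsto)
    have h2 : (∑ i', c ω i' * (0:ℝ) ^ e ω i') = 1 := by
      rw [← hsum ω, Finset.sum_filter]
      refine Finset.sum_congr rfl fun i _ => ?_
      by_cases h : e ω i = 0
      · simp [h]
      · simp [h, Real.zero_rpow h]
    rw [h2] at h1
    exact h1.mono_left nhdsWithin_le_nhds
  have key : ∀ (A : Ω × I → ℤ) (a : ℤ),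
      ∃ L : ℝ≥0∞,
        Tendsto (fun lam => monoVal lam (xcan c e lam) A a) (𝓝[>] (0:ℝ)) (𝓝 L) ∧
        (L = 0 ↔ 0 < (a:ℝ) + ∑ p : Ω × I, (A p : ℝ) * e p.1 p.2) ∧
        (L = ⊤ ↔ (a:ℝ) + ∑ p : Ω × I, (A p : ℝ) * e p.1 p.2 < 0) ∧
        ((L = ∏ p : Ω × I, (ENNReal.ofReal (c p.1 p.2)) ^ (A p) ∧ L ≠ 0 ∧ L ≠ ⊤) ↔
          (a:ℝ) + ∑ p : Ω × I, (A p : ℝ) * e p.1 p.2 = 0) := by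
    intro A a
    set S : ℝ := ∑ p : Ω × I, (A p : ℝ) * e p.1 p.2 with hS
    set E : ℝ := (a:ℝ) + S with hE
    set C : ℝ := ∏ p : Ω × I, c p.1 p.2 ^ A p with hC
    have hCpos : 0 < C := Finset.prod_pos fun p _ => zpow_pos (hc p.1 p.2) _
    set G : ℝ → ℝ := fun l => ∏ p : Ω × I, (∑ i', c p.1 i' * l ^ e p.1 i') ^ (-A p)
      with hGdef
    have hG : Tendsto G (𝓝[>] (0:ℝ)) (𝓝 1) := by
      have : Tendsto G (𝓝[>] (0:ℝ)) (𝓝 (∏ p : Ω × I, (1:ℝ) ^ (-A p))) := by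
        apply tendsto_finset_prod
        intro p _
        exact (hD1 p.1).zpow₀ (-A p) (Or.inl one_ne_zero)
      simpa using this
    have hCG : Tendsto (fun l => C * G l) (𝓝[>] (0:ℝ)) (𝓝 C) := by
      simpa using tendsto_const_nhds.mul hG
    have heq : ∀ l ∈ Set.Ioi (0:ℝ), monoVal l (xcan c e l) A a
        = ENNReal.ofReal (l ^ E * (C * G l)) := by
      intro l hl
      replace hl : (0:ℝ) < l := hl
      have hx : ∀ p : Ω × I, 0 < xcan c e l p.1 p.2 := fun p =>
        div_pos (mul_pos (hc _ _) (Real.rpow_pos_of_pos hl _)) (hDpos _ _ hl)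
      have hre : l ^ (a:ℤ) * ∏ p : Ω × I, (xcan c e l p.1 p.2) ^ (A p)
          = l ^ E * (C * G l) := by
        have h1 : ∀ p : Ω × I, (xcan c e l p.1 p.2) ^ (A p)
            = c p.1 p.2 ^ A p * l ^ ((A p : ℝ) * e p.1 p.2)
              * (∑ i', c p.1 i' * l ^ e p.1 i') ^ (-A p) := by
          intro p
          rw [xcan, zpow_neg, div_zpow, mul_zpow, div_eq_mul_inv]
          congr 2
          rw [← Real.rpow_intCast (l ^ e p.1 p.2) (A p), ← Real.rpow_mul hl.le,
            mul_comm]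
        rw [Finset.prod_congr rfl fun p _ => h1 p, Finset.prod_mul_distrib,
          Finset.prod_mul_distrib, ← Real.rpow_sum_of_pos hl, ← hS,
          ← Real.rpow_intCast l a, hGdef, hE, Real.rpow_add hl, ← hC]
        ring
      unfold monoVal
      rw [← ofReal_zpow' hl a,
        Finset.prod_congr rfl fun (p : Ω × I) _ => (ofReal_zpow' (hx p) (A p)).symm,
        ← ENNReal.ofReal_prod_of_nonneg fun p _ => (zpow_pos (hx p) _).le,
        ← ENNReal.ofReal_mul (zpow_pos hl (a:ℤ)).le]
      exact congrArg ENNReal.ofReal hre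
    have hev : ∀ L : ℝ≥0∞,
        Tendsto (fun l => ENNReal.ofReal (l ^ E * (C * G l))) (𝓝[>] (0:ℝ)) (𝓝 L) →
        Tendsto (fun lam => monoVal lam (xcan c e lam) A a) (𝓝[>] (0:ℝ)) (𝓝 L) :=
      fun L h => h.congr' (eventually_nhdsWithin_of_forall fun l hl => (heq l hl).symm)
    rcases lt_trichotomy E 0 with hE0 | hE0 | hE0
    · -- E < 0 : limit is ⊤
      refine ⟨⊤, hev ⊤ ?_, iff_of_false (by simp) (by linarith),
        iff_of_true rfl hE0, iff_of_false (fun h => h.2.2 rfl) (by linarith)⟩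
      have h1 : Tendsto (fun l : ℝ => l ^ (-E)) (𝓝[>] (0:ℝ)) (𝓝[>] (0:ℝ)) := by
        rw [tendsto_nhdsWithin_iff]
        constructor
        · have := (Real.continuousAt_rpow_const 0 (-E)
            (Or.inr (by linarith))).tendsto.mono_left
            (nhdsWithin_le_nhds : 𝓝[>] (0:ℝ) ≤ 𝓝 0)
          simpa [Real.zero_rpow (by linarith : -E ≠ 0)] using this
        · exact eventually_nhdsWithin_of_forall fun l hl =>
            Real.rpow_pos_of_pos hl _
      have h2 : Tendsto (fun l : ℝ => l ^ E) (𝓝[>] (0:ℝ)) atTop := by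
        refine (tendsto_inv_nhdsGT_zero.comp h1).congr'
          (eventually_nhdsWithin_of_forall fun l hl => ?_)
        simp only [Function.comp_apply]
        rw [← Real.rpow_neg (le_of_lt hl), neg_neg]
      have h3 : Tendsto (fun l : ℝ => l ^ E * (C * G l)) (𝓝[>] (0:ℝ)) atTop :=
        Filter.Tendsto.atTop_mul_pos hCpos h2 hCG
      exact ENNReal.tendsto_ofReal_atTop.comp h3
    · -- E = 0 : limit is ofReal C
      have hCeq : ENNReal.ofReal C = ∏ p : Ω × I, (ENNReal.ofReal (c p.1 p.2)) ^ A p := by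
        rw [hC, ENNReal.ofReal_prod_of_nonneg fun p _ => (zpow_pos (hc p.1 p.2) _).le]
        exact Finset.prod_congr rfl fun p _ => ofReal_zpow' (hc p.1 p.2) (A p)
      refine ⟨ENNReal.ofReal C, hev _ ?_,
        iff_of_false (by simp [ENNReal.ofReal_eq_zero]; linarith) (by linarith),
        iff_of_false ENNReal.ofReal_ne_top (by linarith),
        iff_of_true ⟨hCeq, by simp [ENNReal.ofReal_eq_zero]; linarith,
          ENNReal.ofReal_ne_top⟩ hE0⟩
      have : Tendsto (fun l : ℝ => l ^ E * (C * G l)) (𝓝[>] (0:ℝ)) (𝓝 C) := by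
        refine hCG.congr fun l => ?_
        rw [hE0, Real.rpow_zero, one_mul]
      exact ENNReal.tendsto_ofReal this
    · -- E > 0 : limit is 0
      refine ⟨0, hev 0 ?_, iff_of_true rfl hE0,
        iff_of_false (by simp) (by linarith),
        iff_of_false (fun h => h.2.1 rfl) (by linarith)⟩
      have h1 : Tendsto (fun l : ℝ => l ^ E) (𝓝[>] (0:ℝ)) (𝓝 0) := by
        have := (Real.continuousAt_rpow_const 0 E
          (Or.inr hE0.le)).tendsto.mono_left (nhdsWithin_le_nhds : 𝓝[>] (0:ℝ) ≤ 𝓝 0)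
        simpa [Real.zero_rpow hE0.ne'] using this
      have h2 : Tendsto (fun l : ℝ => l ^ E * (C * G l)) (𝓝[>] (0:ℝ)) (𝓝 0) := by
        simpa using h1.mul hCG
      simpa using ENNReal.tendsto_ofReal h2
  refine ⟨fun A _ a => key A a, fun lam hmem hlim => ⟨hlim, fun A a hM => ?_⟩⟩
  obtain ⟨L, hL, -⟩ := key A a
  exact ⟨L, hL.comp (tendsto_nhdsWithin_iff.mpr
    ⟨hlim, Eventually.of_forall fun n => (hmem n).1⟩)⟩
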